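/- Let U = {β ∈ (0, 1/2] : r > (q-1)/(q²+q-1)}, where for each β the integer q ≥ 2 and the real r ∈ [0, β) are determined by 1 = qβ + r. Then the Lebesgue measure of U equals Σ_{q=2}^{∞} ( q/(q²+q-1) - 1/(q+1) ). -/

import Mathlib

/-- For `β ∈ (0,1/2]`, the integer `q = q(β)` with `1 = qβ + r`, `0 ≤ r < β`,
namely `q = ⌊1/β⌋`. -/
noncomputable def qf (β : ℝ) : ℕ := Nat.floor (1 / β)

/-- For `β ∈ (0,1/2]`, the remainder `r = r(β) = 1 - q(β)·β`, so that `1 = q(β)·β + r(β)`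
with `0 ≤ r(β) < β`. -/
noncomputable def rf (β : ℝ) : ℝ := 1 - (qf β : ℝ) * β

open Set MeasureTheory

noncomputable def aa (n : ℕ) : ℝ := 1 / ((n : ℝ) + 3)

noncomputable def bb (n : ℕ) : ℝ :=
  ((n : ℝ) + 2) / (((n : ℝ) + 2) ^ 2 + ((n : ℝ) + 2) - 1)

lemma bb_pos_denom (n : ℕ) : (0 : ℝ) < ((n : ℝ) + 2) ^ 2 + ((n : ℝ) + 2) - 1 := by
  have : (0:ℝ) ≤ (n:ℝ) := Nat.cast_nonneg n
  nlinarith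

lemma setEq : {β : ℝ | β ∈ Set.Ioc (0 : ℝ) (1 / 2) ∧
        rf β > ((qf β : ℝ) - 1) / ((qf β : ℝ) ^ 2 + (qf β : ℝ) - 1)} =
    ⋃ n : ℕ, Ioo (aa n) (bb n) := by
  ext β
  simp only [mem_setOf_eq, mem_iUnion, mem_Ioo, mem_Ioc, aa, bb]
  constructor
  · rintro ⟨⟨hβ0, hβ2⟩, hr⟩
    have h1β : (0:ℝ) < 1 / β := by positivity
    have hq2 : 2 ≤ qf β := by
      apply Nat.le_floor
      push_cast
      rw [le_div_iff₀ hβ0]; linarith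
    have hfl : (qf β : ℝ) ≤ 1 / β := Nat.floor_le h1β.le
    have hfl' : 1 / β < (qf β : ℝ) + 1 := Nat.lt_floor_add_one (1 / β)
    refine ⟨qf β - 2, ?_, ?_⟩
    · have hc : ((qf β - 2 : ℕ) : ℝ) = (qf β : ℝ) - 2 := by
        push_cast [Nat.cast_sub hq2]; ring
      rw [hc]
      have h1 : 1 < ((qf β : ℝ) + 1) * β := by
        rw [div_lt_iff₀ hβ0] at hfl'; linarith
      have hQ2 : (2:ℝ) ≤ (qf β : ℝ) := by exact_mod_cast hq2
      rw [div_lt_iff₀ (by linarith : (0:ℝ) < (qf β : ℝ) - 2 + 3)]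
      nlinarith
    · have hc : ((qf β - 2 : ℕ) : ℝ) = (qf β : ℝ) - 2 := by
        push_cast [Nat.cast_sub hq2]; ring
      rw [hc]
      have hQ2 : (2:ℝ) ≤ (qf β : ℝ) := by exact_mod_cast hq2
      have hD : (0:ℝ) < (qf β : ℝ) ^ 2 + (qf β : ℝ) - 1 := by nlinarith
      rw [gt_iff_lt, div_lt_iff₀ hD] at hr
      unfold rf at hr
      have : ((qf β : ℝ) - 2 + 2) = (qf β : ℝ) := by ring
      rw [this]
      rw [lt_div_iff₀ (by nlinarith : (0:ℝ) < ((qf β : ℝ)) ^ 2 + (qf β : ℝ) - 1)]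
      nlinarith
  · rintro ⟨n, ha, hb⟩
    set Q : ℝ := (n : ℝ) + 2 with hQ
    have hQ2 : (2:ℝ) ≤ Q := by have : (0:ℝ) ≤ (n:ℝ) := Nat.cast_nonneg n; linarith
    have hD : (0:ℝ) < Q ^ 2 + Q - 1 := by nlinarith
    have hβ0 : 0 < β := lt_trans (by positivity) ha
    have hbQ : β < 1 / Q := by
      apply lt_of_lt_of_le hb
      rw [div_le_div_iff₀ hD (by linarith : (0:ℝ) < Q)]
      nlinarith
    have hβ2 : β ≤ 1 / 2 := by
      apply le_of_lt (lt_of_lt_of_le hbQ _)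
      rw [div_le_div_iff₀ (by linarith : (0:ℝ) < Q) (by norm_num : (0:ℝ) < 2)]
      linarith
    have hqf : qf β = n + 2 := by
      unfold qf
      rw [Nat.floor_eq_iff (by positivity)]
      constructor
      · push_cast
        rw [le_div_iff₀ hβ0]
        rw [lt_div_iff₀ (by linarith : (0:ℝ) < Q)] at hbQ
        nlinarith
      · push_cast
        rw [div_lt_iff₀ hβ0]
        rw [div_lt_iff₀ (by linarith : (0:ℝ) < (n:ℝ) + 3)] at ha
        nlinarith
    refine ⟨⟨hβ0, hβ2⟩, ?_⟩
    rw [hqf]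
    have hcast : ((n + 2 : ℕ) : ℝ) = Q := by push_cast; ring
    rw [hcast]
    unfold rf
    rw [hqf, hcast, gt_iff_lt, div_lt_iff₀ hD]
    rw [lt_div_iff₀ hD] at hb
    nlinarith

lemma term_nonneg (n : ℕ) : 0 ≤ bb n - aa n := by
  have h : (0:ℝ) ≤ (n:ℝ) := Nat.cast_nonneg n
  have hD := bb_pos_denom n
  unfold aa bb
  rw [sub_nonneg, div_le_div_iff₀ (by linarith : (0:ℝ) < (n:ℝ) + 3) hD]
  nlinarith

lemma term_summable : Summable (fun n : ℕ => bb n - aa n) := by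
  have hs : Summable (fun n : ℕ => 1 / ((n:ℝ) + 1) ^ 2) := by
    have := Real.summable_one_div_nat_pow.mpr (by norm_num : 1 < 2)
    exact_mod_cast (summable_nat_add_iff 1).mpr this
  apply Summable.of_nonneg_of_le term_nonneg _ hs
  intro n
  have h : (0:ℝ) ≤ (n:ℝ) := Nat.cast_nonneg n
  have hD := bb_pos_denom n
  unfold aa bb
  have key : ((n : ℝ) + 2) / (((n : ℝ) + 2) ^ 2 + ((n : ℝ) + 2) - 1) - 1 / ((n:ℝ) + 3)
      = 1 / ((((n : ℝ) + 2) ^ 2 + ((n : ℝ) + 2) - 1) * ((n:ℝ) + 3)) := by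
    rw [div_sub_div _ _ hD.ne' (by positivity)]; congr 1
    ring
  rw [key, div_le_div_iff₀ (by positivity) (by positivity)]
  nlinarith

theorem volume_U_eq :
    MeasureTheory.volume {β : ℝ | β ∈ Set.Ioc (0 : ℝ) (1 / 2) ∧
        rf β > ((qf β : ℝ) - 1) / ((qf β : ℝ) ^ 2 + (qf β : ℝ) - 1)} =
      ENNReal.ofReal (∑' q : ℕ,
        (((q : ℝ) + 2) / (((q : ℝ) + 2) ^ 2 + ((q : ℝ) + 2) - 1) -
          1 / (((q : ℝ) + 2) + 1))) := by
  rw [setEq]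
  have hdisj : Pairwise (Function.onFun Disjoint fun n => Ioo (aa n) (bb n)) := by
    have key : ∀ m n : ℕ, m < n → bb n ≤ aa m := by
      intro m n hmn
      have hmn' : (m:ℝ) + 1 ≤ (n:ℝ) := by exact_mod_cast hmn
      have hm : (0:ℝ) ≤ (m:ℝ) := Nat.cast_nonneg m
      have hD := bb_pos_denom n
      unfold aa bb
      rw [div_le_div_iff₀ hD (by linarith : (0:ℝ) < (m:ℝ) + 3)]
      nlinarith
    intro m n hmn
    rcases lt_or_gt_of_ne hmn with h | h
    · have := key m n h
      rw [Function.onFun, Set.disjoint_left]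
      rintro x ⟨hx1, _⟩ ⟨_, hx4⟩
      linarith
    · have := key n m h
      rw [Function.onFun, Set.disjoint_left]
      rintro x ⟨_, hx2⟩ ⟨hx3, _⟩
      linarith
  rw [measure_iUnion hdisj (fun n => measurableSet_Ioo)]
  simp only [Real.volume_Ioo]
  have hsum_eq : (∑' q : ℕ,
        (((q : ℝ) + 2) / (((q : ℝ) + 2) ^ 2 + ((q : ℝ) + 2) - 1) -
          1 / (((q : ℝ) + 2) + 1))) = ∑' n : ℕ, (bb n - aa n) := by
    apply tsum_congr
    intro n
    unfold aa bb
    ring_nf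
  rw [hsum_eq, ENNReal.ofReal_tsum_of_nonneg term_nonneg term_summable]
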